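/- Let U be a finite universe with |U| = n, let 𝒞 be a finite collection of subsets of U with costs c(S) ≥ 0, let r : U → ℤ≥1 be coverage requirements, and let π be a probability distribution on the subsets of U. Suppose nonnegative reals (y^S_B)_{S∈𝒞, B⊆S} satisfy: (i) for every u ∈ U, ∑_{S∈𝒞} ∑_{B⊆S, u∈B} y^S_B ≥ r(u), and (ii) for every S ∈ 𝒞, ∑_{B⊆S} y^S_B ≤ 1. Then there exists a mapping φ assigning to each u ∈ U a family φ(u) of exactly r(u) distinct sets of 𝒞, each containing u, such that ∑_{S∈𝒞} c(S)·g_π({u ∈ U : S ∈ φ(u)}) ≤ H_n · ∑_{S∈𝒞} c(S) ∑_{B⊆S} y^S_B · g_π(B), where H_n = ∑_{i=1}^n 1/i. -/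

import Mathlib

set_option linter.unusedSectionVars false
set_option linter.unusedVariables false
set_option maxHeartbeats 1000000

open Finset

noncomputable def gpi {U : Type*} [Fintype U] [DecidableEq U]
    (π : Finset U → ℝ) (B : Finset U) : ℝ :=
  ∑ X ∈ Finset.univ.filter (fun X : Finset U => (X ∩ B).Nonempty), π X

namespace Greedy10

noncomputable def Hh (m : ℕ) : ℝ := ∑ i ∈ Finset.range m, (1 : ℝ) / (i + 1)

lemma Hh_nonneg (m : ℕ) : 0 ≤ Hh m := by
  apply Finset.sum_nonneg; intro i _; positivity

lemma Hh_mono {a b : ℕ} (h : a ≤ b) : Hh a ≤ Hh b := by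
  apply Finset.sum_le_sum_of_subset_of_nonneg (Finset.range_subset_range.2 h)
  intro i _ _; positivity

lemma Hh_diff {a b : ℕ} (h : a ≤ b) : ((b : ℝ) - a) / b ≤ Hh b - Hh a := by
  rcases Nat.eq_zero_or_pos b with hb | hb
  · subst hb; interval_cases a; simp
  · have h1 : Hh b - Hh a = ∑ i ∈ Finset.Ico a b, (1 : ℝ) / (i + 1) := by
      rw [Hh, Hh, ← Finset.sum_Ico_eq_sub _ h]
    rw [h1]
    have h2 : ∀ i ∈ Finset.Ico a b, (1 : ℝ) / b ≤ 1 / (i + 1) := by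
      intro i hi
      rw [Finset.mem_Ico] at hi
      apply one_div_le_one_div_of_le
      · positivity
      · have : i + 1 ≤ b := hi.2
        exact_mod_cast this
    calc ((b : ℝ) - a) / b = (Finset.Ico a b).card * ((1:ℝ)/b) := by
          rw [Nat.card_Ico]
          rw [Nat.cast_sub h]
          ring
      _ = ∑ _i ∈ Finset.Ico a b, (1:ℝ)/b := by rw [Finset.sum_const, nsmul_eq_mul]
      _ ≤ ∑ i ∈ Finset.Ico a b, (1 : ℝ) / (i + 1) := Finset.sum_le_sum h2

variable {U : Type*} [Fintype U] [DecidableEq U]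

lemma gpi_nonneg (π : Finset U → ℝ) (hπ : ∀ X, 0 ≤ π X) (B : Finset U) : 0 ≤ gpi π B :=
  Finset.sum_nonneg fun X _ => hπ X

lemma gpi_mono (π : Finset U → ℝ) (hπ : ∀ X, 0 ≤ π X) {A B : Finset U} (h : A ⊆ B) :
    gpi π A ≤ gpi π B := by
  apply Finset.sum_le_sum_of_subset_of_nonneg
  · intro X hX
    rw [Finset.mem_filter] at hX ⊢
    exact ⟨hX.1, hX.2.mono (Finset.inter_subset_inter (Finset.Subset.refl X) h)⟩
  · intro X _ _; exact hπ X

lemma gpi_empty (π : Finset U → ℝ) : gpi π (∅ : Finset U) = 0 := by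
  simp [gpi]

lemma gpi_union_le (π : Finset U → ℝ) (hπ : ∀ X, 0 ≤ π X) (A B : Finset U) :
    gpi π (A ∪ B) ≤ gpi π A + gpi π B := by
  have hfil : Finset.univ.filter (fun X : Finset U => (X ∩ (A ∪ B)).Nonempty) =
      Finset.univ.filter (fun X : Finset U => (X ∩ A).Nonempty) ∪
      Finset.univ.filter (fun X : Finset U => (X ∩ B).Nonempty) := by
    ext X
    simp only [Finset.mem_filter, Finset.mem_union, Finset.mem_univ, true_and]
    rw [Finset.inter_union_distrib_left]
    constructor
    · rintro ⟨x, hx⟩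
      rcases Finset.mem_union.1 hx with h | h
      · exact Or.inl ⟨x, h⟩
      · exact Or.inr ⟨x, h⟩
    · rintro (⟨x, hx⟩ | ⟨x, hx⟩)
      · exact ⟨x, Finset.mem_union_left _ hx⟩
      · exact ⟨x, Finset.mem_union_right _ hx⟩
  rw [gpi, hfil, gpi, gpi]
  have := Finset.sum_union_inter (s₁ := Finset.univ.filter (fun X : Finset U => (X ∩ A).Nonempty))
    (s₂ := Finset.univ.filter (fun X : Finset U => (X ∩ B).Nonempty)) (f := π)
  have hnn : 0 ≤ ∑ X ∈ (Finset.univ.filter (fun X : Finset U => (X ∩ A).Nonempty)) ∩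
      (Finset.univ.filter (fun X : Finset U => (X ∩ B).Nonempty)), π X :=
    Finset.sum_nonneg fun X _ => hπ X
  linarith


section Main

variable (𝒞 : Finset (Finset U)) (c : Finset U → ℝ) (r : U → ℕ)
variable (π : Finset U → ℝ) (y : Finset U → Finset U → ℝ)

/-- total fractional mass of configurations of `S` containing `u`. -/
def xw (S : Finset U) (u : U) : ℝ := ∑ B ∈ S.powerset.filter (fun B => u ∈ B), y S B

/-- deficit of `u` at partial assignment `φ`. -/
def dw (φ : U → Finset (Finset U)) (u : U) : ℝ := ∑ S ∈ φ u, (1 - xw y S u)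

/-- number of elements of `B` still available for `S`. -/
def avk (φ : U → Finset (Finset U)) (S B : Finset U) : ℕ :=
  (B.filter (fun u => (φ u).card < r u ∧ S ∉ φ u)).card

/-- potential. -/
noncomputable def Apot (φ : U → Finset (Finset U)) : ℝ :=
  ∑ S ∈ 𝒞, ∑ B ∈ S.powerset, c S * y S B * gpi π B * Hh (avk r φ S B)

/-- available greedy moves. -/
def Mv (φ : U → Finset (Finset U)) : Finset (Finset U × Finset U) :=
  (𝒞 ×ˢ Finset.univ).filter
    (fun p => p.2.Nonempty ∧ p.2 ⊆ p.1 ∧ ∀ u ∈ p.2, (φ u).card < r u ∧ p.1 ∉ φ u)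

/-- greedy ratio of a move. -/
noncomputable def rt (p : Finset U × Finset U) : ℝ := c p.1 * gpi π p.2 / p.2.card

/-- elements assigned to `S`. -/
def asg (φ : U → Finset (Finset U)) (S : Finset U) : Finset U :=
  Finset.univ.filter (fun u => S ∈ φ u)

variable {𝒞 c r π y}

lemma xw_nonneg (hy : ∀ S B, 0 ≤ y S B) (S : Finset U) (u : U) : 0 ≤ xw y S u :=
  Finset.sum_nonneg fun B _ => hy S B

lemma xw_le_one (hy : ∀ S B, 0 ≤ y S B) (hcap : ∀ S ∈ 𝒞, ∑ B ∈ S.powerset, y S B ≤ 1)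
    {S : Finset U} (hS : S ∈ 𝒞) (u : U) : xw y S u ≤ 1 := by
  refine le_trans ?_ (hcap S hS)
  exact Finset.sum_le_sum_of_subset_of_nonneg (Finset.filter_subset _ _)
    (fun B _ _ => hy S B)

lemma xw_zero {S : Finset U} {u : U} (h : u ∉ S) : xw y S u = 0 := by
  rw [xw, Finset.filter_false_of_mem, Finset.sum_empty]
  intro B hB hu
  exact h (Finset.mem_powerset.1 hB hu)

lemma dw_nonneg (hy : ∀ S B, 0 ≤ y S B) (hcap : ∀ S ∈ 𝒞, ∑ B ∈ S.powerset, y S B ≤ 1)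
    {φ : U → Finset (Finset U)} {u : U} (hφ : φ u ⊆ 𝒞) : 0 ≤ dw y φ u :=
  Finset.sum_nonneg fun S hS => by
    have := xw_le_one hy hcap (hφ hS) u; linarith

lemma rt_nonneg (hc : ∀ S ∈ 𝒞, 0 ≤ c S) (hπ : ∀ X, 0 ≤ π X)
    {φ : U → Finset (Finset U)} {m : Finset U × Finset U} (hm : m ∈ Mv 𝒞 r φ) :
    0 ≤ rt c π m := by
  rw [Mv, Finset.mem_filter, Finset.mem_product] at hm
  exact div_nonneg (mul_nonneg (hc _ hm.1.1) (gpi_nonneg π hπ _)) (Nat.cast_nonneg _)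

/-- residual feasibility. -/
lemma residual (hy : ∀ S B, 0 ≤ y S B)
    (hfeas : ∀ u : U, (r u : ℝ) ≤ ∑ S ∈ 𝒞, xw y S u)
    (hcap : ∀ S ∈ 𝒞, ∑ B ∈ S.powerset, y S B ≤ 1)
    {φ : U → Finset (Finset U)} {u : U} (hφ : φ u ⊆ 𝒞) :
    (r u : ℝ) - (φ u).card + dw y φ u ≤ ∑ S ∈ 𝒞.filter (fun S => S ∉ φ u), xw y S u := by
  have hsplit : ∑ S ∈ 𝒞, xw y S u =
      ∑ S ∈ 𝒞.filter (fun S => S ∉ φ u), xw y S u +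
      ∑ S ∈ 𝒞.filter (fun S => S ∈ φ u), xw y S u := by
    rw [← Finset.sum_filter_add_sum_filter_not 𝒞 (fun S => S ∉ φ u)]
    simp only [not_not]
  have hfil : 𝒞.filter (fun S => S ∈ φ u) = φ u := by
    ext S
    simp only [Finset.mem_filter]
    exact ⟨fun h => h.2, fun h => ⟨hφ h, h⟩⟩
  have hdw : ∑ S ∈ φ u, xw y S u = (φ u).card - dw y φ u := by
    rw [dw, Finset.sum_sub_distrib, Finset.sum_const, nsmul_eq_mul, mul_one]
    ring
  have := hfeas u
  rw [hsplit, hfil, hdw] at this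
  linarith

lemma Apot_nonneg (hc : ∀ S ∈ 𝒞, 0 ≤ c S) (hπ : ∀ X, 0 ≤ π X) (hy : ∀ S B, 0 ≤ y S B)
    (φ : U → Finset (Finset U)) : 0 ≤ Apot 𝒞 c r π y φ := by
  apply Finset.sum_nonneg; intro S hS
  apply Finset.sum_nonneg; intro B _
  have := gpi_nonneg π hπ B
  have := Hh_nonneg (avk r φ S B)
  have := hc S hS
  have := hy S B
  positivity


/-- the case where everything is already assigned. -/
lemma finish_case (hc : ∀ S ∈ 𝒞, 0 ≤ c S) (hπ : ∀ X, 0 ≤ π X) (hy : ∀ S B, 0 ≤ y S B)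
    (φ : U → Finset (Finset U)) (e : U → ℝ)
    (hall : ∀ u, (φ u).card = r u)
    (hsubC : ∀ u, φ u ⊆ 𝒞) (hmemS : ∀ u, ∀ S ∈ φ u, u ∈ S)
    (heq : ∀ u, (φ u).card = r u → e u = 0) :
    ∃ ψ : U → Finset (Finset U),
      (∀ u, φ u ⊆ ψ u ∧ ψ u ⊆ 𝒞 ∧ (ψ u).card = r u ∧ ∀ S ∈ ψ u, u ∈ S) ∧
      ∑ S ∈ 𝒞, c S * gpi π (asg ψ S) ≤
        ∑ S ∈ 𝒞, c S * gpi π (asg φ S) + Apot 𝒞 c r π y φ - ∑ u, e u := by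
  refine ⟨φ, fun u => ⟨Finset.Subset.refl _, hsubC u, hall u, hmemS u⟩, ?_⟩
  have he : ∑ u, e u = 0 := Finset.sum_eq_zero fun u _ => heq u (hall u)
  have hA := Apot_nonneg hc hπ hy (r := r) φ
  rw [he]
  linarith

lemma greedy_main (hc : ∀ S ∈ 𝒞, 0 ≤ c S) (hπ : ∀ X, 0 ≤ π X) (hy : ∀ S B, 0 ≤ y S B)
    (hfeas : ∀ u : U, (r u : ℝ) ≤ ∑ S ∈ 𝒞, xw y S u)
    (hcap : ∀ S ∈ 𝒞, ∑ B ∈ S.powerset, y S B ≤ 1) :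
    ∀ N : ℕ, ∀ φ : U → Finset (Finset U), ∀ e : U → ℝ,
      (∑ u, (r u - (φ u).card)) ≤ N →
      (∀ u, φ u ⊆ 𝒞) → (∀ u, ∀ S ∈ φ u, u ∈ S) → (∀ u, (φ u).card ≤ r u) →
      (∀ u, 0 ≤ e u) → (∀ u, (φ u).card = r u → e u = 0) →
      (∀ u, (φ u).card < r u → ∀ m ∈ Mv 𝒞 r φ, e u ≤ dw y φ u * rt c π m) →
      ∃ ψ : U → Finset (Finset U),
        (∀ u, φ u ⊆ ψ u ∧ ψ u ⊆ 𝒞 ∧ (ψ u).card = r u ∧ ∀ S ∈ ψ u, u ∈ S) ∧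
        ∑ S ∈ 𝒞, c S * gpi π (asg ψ S) ≤
          ∑ S ∈ 𝒞, c S * gpi π (asg φ S) + Apot 𝒞 c r π y φ - ∑ u, e u := by
  intro N
  induction N with
  | zero =>
    intro φ e hN hsubC hmemS hcard he0 heq hinv
    have hall : ∀ u, (φ u).card = r u := by
      intro u
      have : r u - (φ u).card = 0 :=
        Nat.eq_zero_of_le_zero (le_trans (Finset.single_le_sum
          (f := fun u => r u - (φ u).card) (fun u _ => Nat.zero_le _) (Finset.mem_univ u)) hN)
      have := hcard u
      omega
    exact finish_case hc hπ hy φ e hall hsubC hmemS heq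
  | succ N ih =>
    intro φ e hN hsubC hmemS hcard he0 heq hinv
    by_cases hall : ∀ u, (φ u).card = r u
    · exact finish_case hc hπ hy φ e hall hsubC hmemS heq
    push_neg at hall
    obtain ⟨u₀, hu₀⟩ := hall
    have hu₀lt : (φ u₀).card < r u₀ := lt_of_le_of_ne (hcard u₀) hu₀
    -- there is an available set for u₀
    have hex : ∃ S ∈ 𝒞, u₀ ∈ S ∧ S ∉ φ u₀ := by
      by_contra hcon
      push_neg at hcon
      have hres := residual hy hfeas hcap (hsubC u₀)
      have hzero : ∑ S ∈ 𝒞.filter (fun S => S ∉ φ u₀), xw y S u₀ = 0 := by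
        apply Finset.sum_eq_zero
        intro S hS
        rw [Finset.mem_filter] at hS
        exact xw_zero (fun hu => hS.2 (hcon S hS.1 hu))
      have hdw := dw_nonneg hy hcap (hsubC u₀)
      have h1 : ((φ u₀).card : ℝ) + 1 ≤ (r u₀ : ℝ) := by exact_mod_cast hu₀lt
      rw [hzero] at hres
      linarith
    obtain ⟨S₀, hS₀C, hu₀S₀, hS₀n⟩ := hex
    have hMne : (Mv 𝒞 r φ).Nonempty := by
      refine ⟨(S₀, {u₀}), ?_⟩
      rw [Mv, Finset.mem_filter, Finset.mem_product]
      refine ⟨⟨hS₀C, Finset.mem_univ _⟩, Finset.singleton_nonempty _, ?_, ?_⟩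
      · simp [Finset.singleton_subset_iff, hu₀S₀]
      · intro u hu
        rw [Finset.mem_singleton] at hu
        subst hu
        exact ⟨hu₀lt, hS₀n⟩
    obtain ⟨m, hmM, hmin⟩ := Finset.exists_min_image (Mv 𝒞 r φ) (rt c π) hMne
    have hmM' := hmM
    rw [Mv, Finset.mem_filter, Finset.mem_product] at hmM'
    obtain ⟨⟨hS'C, -⟩, hB'ne, hB'S, hB'av⟩ := hmM'
    set S' := m.1 with hS'def
    set B' := m.2 with hB'def
    set ρ := rt c π m with hρdef
    have hρnn : 0 ≤ ρ := rt_nonneg hc hπ hmM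
    have hρmul : ρ * B'.card = c S' * gpi π B' := by
      rw [hρdef, rt]
      have : (B'.card : ℝ) ≠ 0 :=
        Nat.cast_ne_zero.2 (Finset.card_ne_zero_of_mem hB'ne.choose_spec)
      field_simp
      rw [← hS'def, ← hB'def]
      ring
    classical
    set φ' : U → Finset (Finset U) := fun u => if u ∈ B' then insert S' (φ u) else φ u
      with hφ'def
    set e' : U → ℝ := fun u => if u ∈ B' then
        (if (φ u).card + 1 = r u then 0 else e u + (1 - xw y S' u) * ρ) else e u
      with he'def
    -- basic facts about φ'
    have hφsub : ∀ u, φ u ⊆ φ' u := by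
      intro u
      rw [hφ'def]
      by_cases hu : u ∈ B' <;> simp [hu, Finset.subset_insert]
    have hcard' : ∀ u ∈ B', (φ' u).card = (φ u).card + 1 := by
      intro u hu
      rw [hφ'def]
      simp only [hu, if_true]
      exact Finset.card_insert_of_notMem (hB'av u hu).2
    have hcard'' : ∀ u ∉ B', φ' u = φ u := by
      intro u hu
      rw [hφ'def]
      simp [hu]
    have hcardmono : ∀ u, (φ u).card ≤ (φ' u).card := fun u =>
      Finset.card_le_card (hφsub u)
    have havmono : ∀ (S : Finset U) (u : U),
        ((φ' u).card < r u ∧ S ∉ φ' u) → ((φ u).card < r u ∧ S ∉ φ u) := by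
      intro S u h
      exact ⟨lt_of_le_of_lt (hcardmono u) h.1, fun hS => h.2 (hφsub u hS)⟩
    have hMsub : Mv 𝒞 r φ' ⊆ Mv 𝒞 r φ := by
      intro p hp
      rw [Mv, Finset.mem_filter] at hp ⊢
      exact ⟨hp.1, hp.2.1, hp.2.2.1, fun u hu => havmono p.1 u (hp.2.2.2 u hu)⟩
    have havk_le : ∀ S B : Finset U, avk r φ' S B ≤ avk r φ S B := by
      intro S B
      apply Finset.card_le_card
      intro u hu
      rw [Finset.mem_filter] at hu ⊢
      exact ⟨hu.1, havmono S u hu.2⟩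
    have havk_diff : ∀ S B : Finset U,
        ((avk r φ S B : ℝ) - avk r φ' S B) =
        ((B.filter (fun u => ((φ u).card < r u ∧ S ∉ φ u) ∧
            ¬((φ' u).card < r u ∧ S ∉ φ' u))).card : ℝ) := by
      intro S B
      have hsub : B.filter (fun u => (φ' u).card < r u ∧ S ∉ φ' u) ⊆
          B.filter (fun u => (φ u).card < r u ∧ S ∉ φ u) := by
        intro u hu
        rw [Finset.mem_filter] at hu ⊢
        exact ⟨hu.1, havmono S u hu.2⟩
      have hset : B.filter (fun u => (φ u).card < r u ∧ S ∉ φ u) \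
          B.filter (fun u => (φ' u).card < r u ∧ S ∉ φ' u) =
          B.filter (fun u => ((φ u).card < r u ∧ S ∉ φ u) ∧
            ¬((φ' u).card < r u ∧ S ∉ φ' u)) := by
        ext u
        simp only [Finset.mem_sdiff, Finset.mem_filter]
        tauto
      rw [← hset, Finset.card_sdiff_of_subset hsub, Nat.cast_sub (Finset.card_le_card hsub)]
      rfl
    -- P1 : per-pair ratio inequality
    have hP1 : ∀ S ∈ 𝒞, ∀ B ∈ S.powerset,
        ρ * ((avk r φ S B : ℝ) - avk r φ' S B) ≤
        c S * gpi π B * (Hh (avk r φ S B) - Hh (avk r φ' S B)) := by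
      intro S hS B hB
      have hkk : avk r φ' S B ≤ avk r φ S B := havk_le S B
      rcases eq_or_lt_of_le hkk with hkeq | hklt
      · rw [hkeq]; simp
      · have hkpos : 0 < avk r φ S B := lt_of_le_of_lt (Nat.zero_le _) hklt
        have hk0 : (0:ℝ) < (avk r φ S B : ℝ) := by exact_mod_cast hkpos
        set Ba := B.filter (fun u => (φ u).card < r u ∧ S ∉ φ u) with hBadef
        have hBane : Ba.Nonempty := Finset.card_pos.1 hkpos
        have hmove : (S, Ba) ∈ Mv 𝒞 r φ := by
          rw [Mv, Finset.mem_filter, Finset.mem_product]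
          refine ⟨⟨hS, Finset.mem_univ _⟩, hBane, ?_, ?_⟩
          · exact (Finset.filter_subset _ _).trans (Finset.mem_powerset.1 hB)
          · intro u hu; exact (Finset.mem_filter.1 hu).2
        have hρle : ρ ≤ c S * gpi π Ba / (avk r φ S B : ℝ) := hmin _ hmove
        have hgmono : gpi π Ba ≤ gpi π B := gpi_mono π hπ (Finset.filter_subset _ _)
        have hcgB0 : 0 ≤ c S * gpi π B := mul_nonneg (hc S hS) (gpi_nonneg π hπ B)
        have hcg : ρ ≤ c S * gpi π B / (avk r φ S B : ℝ) := by
          refine le_trans hρle ?_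
          apply div_le_div_of_nonneg_right ?_ hk0.le
          · exact mul_le_mul_of_nonneg_left hgmono (hc S hS)
        have hd := Hh_diff hkk
        have hsubnn : (0:ℝ) ≤ (avk r φ S B : ℝ) - (avk r φ' S B : ℝ) := by
          have : ((avk r φ' S B : ℝ)) ≤ (avk r φ S B : ℝ) := by exact_mod_cast hkk
          linarith
        have h2 := mul_le_mul_of_nonneg_right hcg hsubnn
        have h3 := mul_le_mul_of_nonneg_left hd hcgB0
        have h4 : c S * gpi π B / (avk r φ S B : ℝ) *
            ((avk r φ S B : ℝ) - (avk r φ' S B : ℝ)) =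
            c S * gpi π B * (((avk r φ S B : ℝ) - (avk r φ' S B : ℝ)) / (avk r φ S B : ℝ)) := by
          ring
        rw [h4] at h2
        linarith
    -- counting lower bound
    have hcount : ∑ u ∈ B', (if (φ u).card + 1 = r u
          then ρ * ∑ S ∈ 𝒞.filter (fun S => S ∉ φ u), xw y S u
          else ρ * xw y S' u) ≤
        ∑ S ∈ 𝒞, ∑ B ∈ S.powerset,
          y S B * (ρ * ((avk r φ S B : ℝ) - avk r φ' S B)) := by
      have hswap : ∑ S ∈ 𝒞, ∑ B ∈ S.powerset, ∑ u ∈ B', (y S B * ρ) *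
            (if (u ∈ B ∧ (((φ u).card < r u ∧ S ∉ φ u) ∧
              ¬((φ' u).card < r u ∧ S ∉ φ' u))) then (1:ℝ) else 0) =
          ∑ u ∈ B', ∑ S ∈ 𝒞, ∑ B ∈ S.powerset, (y S B * ρ) *
            (if (u ∈ B ∧ (((φ u).card < r u ∧ S ∉ φ u) ∧
              ¬((φ' u).card < r u ∧ S ∉ φ' u))) then (1:ℝ) else 0) := by
        rw [Finset.sum_comm]
        apply Finset.sum_congr rfl
        intro u _
        rw [Finset.sum_comm]
      have hperu : ∀ u ∈ B', (if (φ u).card + 1 = r u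
            then ρ * ∑ S ∈ 𝒞.filter (fun S => S ∉ φ u), xw y S u
            else ρ * xw y S' u) ≤
          ∑ S ∈ 𝒞, ∑ B ∈ S.powerset, (y S B * ρ) *
            (if (u ∈ B ∧ (((φ u).card < r u ∧ S ∉ φ u) ∧
              ¬((φ' u).card < r u ∧ S ∉ φ' u))) then (1:ℝ) else 0) := by
        intro u hu
        have hinner : ∀ S : Finset U, ∑ B ∈ S.powerset, (y S B * ρ) *
            (if (u ∈ B ∧ (((φ u).card < r u ∧ S ∉ φ u) ∧
              ¬((φ' u).card < r u ∧ S ∉ φ' u))) then (1:ℝ) else 0) =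
            (if (((φ u).card < r u ∧ S ∉ φ u) ∧
              ¬((φ' u).card < r u ∧ S ∉ φ' u)) then ρ * xw y S u else 0) := by
          intro S
          by_cases hQS : (((φ u).card < r u ∧ S ∉ φ u) ∧
              ¬((φ' u).card < r u ∧ S ∉ φ' u))
          · rw [if_pos hQS]
            have hre : ∀ B ∈ S.powerset, (y S B * ρ) *
                (if (u ∈ B ∧ (((φ u).card < r u ∧ S ∉ φ u) ∧
                  ¬((φ' u).card < r u ∧ S ∉ φ' u))) then (1:ℝ) else 0) =
                (if u ∈ B then y S B * ρ else 0) := by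
              intro B _
              by_cases hub : u ∈ B <;> simp [hub, hQS]
            rw [Finset.sum_congr rfl hre, ← Finset.sum_filter, xw, Finset.mul_sum]
            apply Finset.sum_congr rfl
            intro B _
            ring
          · rw [if_neg hQS]
            apply Finset.sum_eq_zero
            intro B _
            rw [if_neg (fun h => hQS h.2), mul_zero]
        rw [Finset.sum_congr rfl (fun S _ => hinner S)]
        by_cases hexh : (φ u).card + 1 = r u
        · rw [if_pos hexh]
          have hcongr : ∀ S ∈ 𝒞, (if (((φ u).card < r u ∧ S ∉ φ u) ∧
              ¬((φ' u).card < r u ∧ S ∉ φ' u)) then ρ * xw y S u else 0) =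
              (if S ∉ φ u then ρ * xw y S u else 0) := by
            intro S _
            by_cases hSφ : S ∈ φ u
            · rw [if_neg (fun h => h.1.2 hSφ), if_neg (fun h => h hSφ)]
            · rw [if_pos hSφ, if_pos]
              refine ⟨⟨(hB'av u hu).1, hSφ⟩, fun hav' => ?_⟩
              have : (φ' u).card = r u := by rw [hcard' u hu, hexh]
              rw [this] at hav'
              exact lt_irrefl _ hav'.1
          rw [Finset.sum_congr rfl hcongr, ← Finset.sum_filter, Finset.mul_sum]
        · rw [if_neg hexh]
          have hQ' : (((φ u).card < r u ∧ S' ∉ φ u) ∧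
              ¬((φ' u).card < r u ∧ S' ∉ φ' u)) := by
            refine ⟨hB'av u hu, fun hav' => hav'.2 ?_⟩
            simp only [hφ'def, hu, if_true]
            exact Finset.mem_insert_self _ _
          have hnn : ∀ S ∈ 𝒞, (0:ℝ) ≤ (if (((φ u).card < r u ∧ S ∉ φ u) ∧
              ¬((φ' u).card < r u ∧ S ∉ φ' u)) then ρ * xw y S u else 0) := by
            intro S _
            split
            · exact mul_nonneg hρnn (xw_nonneg hy S u)
            · exact le_refl 0
          have := Finset.single_le_sum hnn hS'C
          rw [if_pos hQ'] at this
          exact this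
      refine le_trans (Finset.sum_le_sum hperu) ?_
      rw [← hswap]
      apply Finset.sum_le_sum
      intro S hS
      apply Finset.sum_le_sum
      intro B hB
      rw [← Finset.mul_sum, Finset.sum_boole]
      have hcle : ((B'.filter (fun u => (u ∈ B ∧ (((φ u).card < r u ∧ S ∉ φ u) ∧
          ¬((φ' u).card < r u ∧ S ∉ φ' u))))).card : ℝ) ≤
          ((avk r φ S B : ℝ) - avk r φ' S B) := by
        rw [havk_diff S B]
        have : (B'.filter (fun u => (u ∈ B ∧ (((φ u).card < r u ∧ S ∉ φ u) ∧
            ¬((φ' u).card < r u ∧ S ∉ φ' u))))) ⊆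
            (B.filter (fun u => ((φ u).card < r u ∧ S ∉ φ u) ∧
            ¬((φ' u).card < r u ∧ S ∉ φ' u))) := by
          intro v hv
          rw [Finset.mem_filter] at hv ⊢
          exact ⟨hv.2.1, hv.2.2⟩
        exact_mod_cast Finset.card_le_card this
      calc (y S B * ρ) * ((B'.filter (fun u => (u ∈ B ∧ (((φ u).card < r u ∧ S ∉ φ u) ∧
            ¬((φ' u).card < r u ∧ S ∉ φ' u))))).card : ℝ) ≤
          (y S B * ρ) * ((avk r φ S B : ℝ) - avk r φ' S B) :=
            mul_le_mul_of_nonneg_left hcle (mul_nonneg (hy S B) hρnn)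
        _ = y S B * (ρ * ((avk r φ S B : ℝ) - avk r φ' S B)) := by ring
    -- P4 : potential drop dominates
    have hP4 : ∑ S ∈ 𝒞, ∑ B ∈ S.powerset,
          y S B * (ρ * ((avk r φ S B : ℝ) - avk r φ' S B)) ≤
        Apot 𝒞 c r π y φ - Apot 𝒞 c r π y φ' := by
      rw [Apot, Apot, ← Finset.sum_sub_distrib]
      apply Finset.sum_le_sum
      intro S hS
      rw [← Finset.sum_sub_distrib]
      apply Finset.sum_le_sum
      intro B hB
      have h2 := mul_le_mul_of_nonneg_left (hP1 S hS B hB) (hy S B)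
      calc y S B * (ρ * ((avk r φ S B : ℝ) - avk r φ' S B)) ≤
          y S B * (c S * gpi π B * (Hh (avk r φ S B) - Hh (avk r φ' S B))) := h2
        _ = c S * y S B * gpi π B * Hh (avk r φ S B) -
            c S * y S B * gpi π B * Hh (avk r φ' S B) := by ring
    -- P3 : exhaustion payback
    have hP3 : ∀ u ∈ B', (φ u).card + 1 = r u →
        ρ + e u ≤ ρ * ∑ S ∈ 𝒞.filter (fun S => S ∉ φ u), xw y S u := by
      intro u hu hexh
      have hres := residual hy hfeas hcap (𝒞 := 𝒞) (r := r) (u := u) (hsubC u)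
      have h1 : (r u : ℝ) - (φ u).card = 1 := by
        rw [← hexh]; push_cast; ring
      have he := hinv u (hB'av u hu).1 m hmM
      rw [← hρdef] at he
      have h2 : 1 + dw y φ u ≤ ∑ S ∈ 𝒞.filter (fun S => S ∉ φ u), xw y S u := by
        linarith
      have h3 := mul_le_mul_of_nonneg_left h2 hρnn
      nlinarith
    -- e sums
    have hesum : ∑ u, e u - ∑ u, e' u = ∑ u ∈ B', (e u - e' u) := by
      rw [← Finset.sum_sub_distrib]
      symm
      apply Finset.sum_subset (Finset.subset_univ B')
      intro u _ hu
      simp only [he'def, hu, if_false, sub_self]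
    -- P5 : combined step inequality
    have hP5 : c S' * gpi π B' + (∑ u, e u - ∑ u, e' u) ≤
        Apot 𝒞 c r π y φ - Apot 𝒞 c r π y φ' := by
      rw [hesum, ← hρmul]
      have hconst : ρ * (B'.card : ℝ) = ∑ _u ∈ B', ρ := by
        rw [Finset.sum_const, nsmul_eq_mul]; ring
      rw [hconst, ← Finset.sum_add_distrib]
      refine le_trans (le_trans (Finset.sum_le_sum ?_) hcount) hP4
      intro u hu
      by_cases hexh : (φ u).card + 1 = r u
      · rw [if_pos hexh]
        have h1 : e' u = 0 := by simp only [he'def, hu, if_true, hexh]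
        have := hP3 u hu hexh
        rw [h1]
        linarith
      · rw [if_neg hexh]
        have h1 : e' u = e u + (1 - xw y S' u) * ρ := by
          simp only [he'def, hu, if_true, hexh, if_false]
        rw [h1]
        ring_nf
        apply le_of_eq
        ring
    -- measure decrease
    have hNdec : ∑ u, (r u - (φ' u).card) ≤ N := by
      have hlt : ∑ u, (r u - (φ' u).card) < ∑ u, (r u - (φ u).card) := by
        apply Finset.sum_lt_sum
        · intro u _
          have := hcardmono u; omega
        · obtain ⟨u₁, hu₁⟩ := hB'ne
          refine ⟨u₁, Finset.mem_univ _, ?_⟩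
          have h2 := hcard' u₁ hu₁
          have h3 := (hB'av u₁ hu₁).1
          omega
      omega
    -- invariants at φ'
    have hsubC' : ∀ u, φ' u ⊆ 𝒞 := by
      intro u
      simp only [hφ'def]
      by_cases hu : u ∈ B' <;> simp only [hu, if_true, if_false]
      · exact Finset.insert_subset hS'C (hsubC u)
      · exact hsubC u
    have hmemS' : ∀ u, ∀ S ∈ φ' u, u ∈ S := by
      intro u S hS
      simp only [hφ'def] at hS
      by_cases hu : u ∈ B'
      · rw [if_pos hu, Finset.mem_insert] at hS
        rcases hS with rfl | hS
        · exact hB'S hu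
        · exact hmemS u S hS
      · rw [if_neg hu] at hS
        exact hmemS u S hS
    have hcard2' : ∀ u, (φ' u).card ≤ r u := by
      intro u
      by_cases hu : u ∈ B'
      · rw [hcard' u hu]
        exact (hB'av u hu).1
      · rw [hcard'' u hu]
        exact hcard u
    have he0' : ∀ u, 0 ≤ e' u := by
      intro u
      simp only [he'def]
      by_cases hu : u ∈ B' <;> simp only [hu, if_true, if_false]
      · by_cases hexh : (φ u).card + 1 = r u <;>
          simp only [hexh, if_true, if_false]
        · exact le_refl 0
        · have hx1 := xw_le_one hy hcap hS'C u
          have := he0 u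
          nlinarith
      · exact he0 u
    have heq' : ∀ u, (φ' u).card = r u → e' u = 0 := by
      intro u hru
      simp only [he'def]
      by_cases hu : u ∈ B'
      · rw [hcard' u hu] at hru
        simp only [hu, if_true, hru, if_pos rfl]
      · rw [hcard'' u hu] at hru
        simp only [hu, if_false]
        exact heq u hru
    have hinv' : ∀ u, (φ' u).card < r u → ∀ m' ∈ Mv 𝒞 r φ', e' u ≤ dw y φ' u * rt c π m' := by
      intro u hlt m' hm'
      have hm'φ := hMsub hm'
      have hρm' : ρ ≤ rt c π m' := hmin m' hm'φ
      have hrtnn : 0 ≤ rt c π m' := rt_nonneg hc hπ hm'φ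
      by_cases hu : u ∈ B'
      · have hexh : ¬ ((φ u).card + 1 = r u) := by
          rw [hcard' u hu] at hlt; omega
        have h1 : e' u = e u + (1 - xw y S' u) * ρ := by
          simp only [he'def, hu, if_true, hexh, if_false]
        have h2 : dw y φ' u = dw y φ u + (1 - xw y S' u) := by
          have hφ'u : φ' u = insert S' (φ u) := by simp only [hφ'def, hu, if_true]
          rw [dw, hφ'u, Finset.sum_insert (hB'av u hu).2, dw]
          ring
        have h3 : e u ≤ dw y φ u * rt c π m' := hinv u (hB'av u hu).1 m' hm'φ
        have hx1 := xw_le_one hy hcap hS'C u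
        have h4 : (1 - xw y S' u) * ρ ≤ (1 - xw y S' u) * rt c π m' :=
          mul_le_mul_of_nonneg_left hρm' (by linarith)
        rw [h1, h2]
        nlinarith
      · have h1 : e' u = e u := by simp only [he'def, hu, if_false]
        have h2 : φ' u = φ u := hcard'' u hu
        rw [h1, dw, h2, ← dw]
        rw [h2] at hlt
        exact hinv u hlt m' hm'φ
    -- cost telescoping
    have hasg : ∀ S ∈ 𝒞, c S * gpi π (asg φ' S) ≤
        c S * gpi π (asg φ S) + (if S = S' then c S' * gpi π B' else 0) := by
      intro S hS
      by_cases hSS : S = S'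
      · have hA : asg φ' S' = asg φ S' ∪ B' := by
          ext u
          simp only [asg, Finset.mem_filter, Finset.mem_univ, true_and,
            Finset.mem_union, hφ'def]
          by_cases hu : u ∈ B' <;> simp [hu]
        rw [hSS, if_pos rfl, hA]
        have hun := gpi_union_le π hπ (asg φ S') B'
        have hc0 := hc S' hS'C
        nlinarith
      · have hA : asg φ' S = asg φ S := by
          ext u
          simp only [asg, Finset.mem_filter, Finset.mem_univ, true_and, hφ'def]
          by_cases hu : u ∈ B' <;> simp [hu, Finset.mem_insert, hSS]
        rw [hA, if_neg hSS, add_zero]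
    have hP0 : ∑ S ∈ 𝒞, c S * gpi π (asg φ' S) ≤
        ∑ S ∈ 𝒞, c S * gpi π (asg φ S) + c S' * gpi π B' := by
      calc ∑ S ∈ 𝒞, c S * gpi π (asg φ' S) ≤
          ∑ S ∈ 𝒞, (c S * gpi π (asg φ S) + (if S = S' then c S' * gpi π B' else 0)) :=
            Finset.sum_le_sum hasg
        _ = ∑ S ∈ 𝒞, c S * gpi π (asg φ S) +
            ∑ S ∈ 𝒞, (if S = S' then c S' * gpi π B' else 0) := Finset.sum_add_distrib
        _ = ∑ S ∈ 𝒞, c S * gpi π (asg φ S) + c S' * gpi π B' := by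
            rw [Finset.sum_ite_eq' 𝒞 S' (fun _ => c S' * gpi π B'), if_pos hS'C]
    -- apply the induction hypothesis
    obtain ⟨ψ, hψprop, hψcost⟩ := ih φ' e' hNdec hsubC' hmemS' hcard2' he0' heq' hinv'
    refine ⟨ψ, fun u => ⟨(hφsub u).trans (hψprop u).1, (hψprop u).2.1,
      (hψprop u).2.2.1, (hψprop u).2.2.2⟩, ?_⟩
    linarith
end Main
end Greedy10

/-- The `H_n`-approximation guarantee for universal stochastic constrained set multicover
relative to the configuration LP (CONF-LP-CSM): any feasible fractional solution can be
rounded (e.g. by the greedy algorithm) to an assignment `φ` of exactly `r(u)` distinct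
sets containing each element `u`, of expected cost at most `H_n` times the LP cost. -/
theorem stmt10 {U : Type*} [Fintype U] [DecidableEq U]
    (𝒞 : Finset (Finset U)) (c : Finset U → ℝ) (hc : ∀ S ∈ 𝒞, 0 ≤ c S)
    (r : U → ℕ) (hr : ∀ u, 1 ≤ r u)
    (π : Finset U → ℝ) (hπ : ∀ X, 0 ≤ π X) (hsum : ∑ X : Finset U, π X = 1)
    (y : Finset U → Finset U → ℝ) (hy : ∀ S B : Finset U, 0 ≤ y S B)
    (hfeas : ∀ u : U,
      (r u : ℝ) ≤ ∑ S ∈ 𝒞, ∑ B ∈ S.powerset.filter (fun B : Finset U => u ∈ B), y S B)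
    (hcap : ∀ S ∈ 𝒞, ∑ B ∈ S.powerset, y S B ≤ 1) :
    ∃ φ : U → Finset (Finset U),
      (∀ u : U, φ u ⊆ 𝒞 ∧ (φ u).card = r u ∧ ∀ S ∈ φ u, u ∈ S) ∧
      ∑ S ∈ 𝒞, c S * gpi π (Finset.univ.filter (fun u : U => S ∈ φ u)) ≤
        (∑ i ∈ Finset.range (Fintype.card U), (1 : ℝ) / (i + 1)) *
          ∑ S ∈ 𝒞, c S * ∑ B ∈ S.powerset, y S B * gpi π B := by
  classical
  have hfeas' : ∀ u : U, (r u : ℝ) ≤ ∑ S ∈ 𝒞, Greedy10.xw y S u := by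
    intro u
    simpa [Greedy10.xw] using hfeas u
  obtain ⟨ψ, hψprop, hψcost⟩ := Greedy10.greedy_main hc hπ hy hfeas' hcap
    (∑ u, r u) (fun _ => ∅) (fun _ => 0)
    (by simp)
    (fun u => Finset.empty_subset _)
    (fun u S hS => absurd hS (Finset.notMem_empty S))
    (fun u => by simp)
    (fun u => le_refl 0)
    (fun u _ => rfl)
    (fun u _ m _ => by simp [Greedy10.dw])
  refine ⟨ψ, fun u => ⟨(hψprop u).2.1, (hψprop u).2.2.1, (hψprop u).2.2.2⟩, ?_⟩
  have hzero : ∑ S ∈ 𝒞, c S * gpi π (Greedy10.asg (fun _ => (∅ : Finset (Finset U))) S) = 0 := by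
    apply Finset.sum_eq_zero
    intro S _
    have : Greedy10.asg (fun _ => (∅ : Finset (Finset U))) S = ∅ := by
      simp [Greedy10.asg]
    rw [this, Greedy10.gpi_empty, mul_zero]
  have hApot : Greedy10.Apot 𝒞 c r π y (fun _ => (∅ : Finset (Finset U))) ≤
      Greedy10.Hh (Fintype.card U) * ∑ S ∈ 𝒞, c S * ∑ B ∈ S.powerset, y S B * gpi π B := by
    rw [Greedy10.Apot]
    have hstep : ∀ S ∈ 𝒞, ∑ B ∈ S.powerset,
        c S * y S B * gpi π B * Greedy10.Hh
          (Greedy10.avk r (fun _ => (∅ : Finset (Finset U))) S B) ≤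
        Greedy10.Hh (Fintype.card U) * (c S * ∑ B ∈ S.powerset, y S B * gpi π B) := by
      intro S hS
      rw [Finset.mul_sum, Finset.mul_sum]
      apply Finset.sum_le_sum
      intro B _
      have hk : Greedy10.avk r (fun _ => (∅ : Finset (Finset U))) S B ≤ Fintype.card U := by
        rw [Greedy10.avk]
        exact le_trans (Finset.card_le_card (Finset.filter_subset _ _)) (Finset.card_le_univ B)
      have hH := Greedy10.Hh_mono hk
      have h1 : 0 ≤ c S * y S B * gpi π B :=
        mul_nonneg (mul_nonneg (hc S hS) (hy S B)) (Greedy10.gpi_nonneg π hπ B)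
      calc c S * y S B * gpi π B * Greedy10.Hh
            (Greedy10.avk r (fun _ => (∅ : Finset (Finset U))) S B) ≤
          c S * y S B * gpi π B * Greedy10.Hh (Fintype.card U) :=
            mul_le_mul_of_nonneg_left hH h1
        _ = Greedy10.Hh (Fintype.card U) * (c S * (y S B * gpi π B)) := by ring
    calc ∑ S ∈ 𝒞, ∑ B ∈ S.powerset, c S * y S B * gpi π B * Greedy10.Hh
          (Greedy10.avk r (fun _ => (∅ : Finset (Finset U))) S B) ≤
        ∑ S ∈ 𝒞, Greedy10.Hh (Fintype.card U) * (c S * ∑ B ∈ S.powerset, y S B * gpi π B) :=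
          Finset.sum_le_sum hstep
      _ = Greedy10.Hh (Fintype.card U) * ∑ S ∈ 𝒞, c S * ∑ B ∈ S.powerset, y S B * gpi π B := by
          rw [Finset.mul_sum]
  have hHdef : Greedy10.Hh (Fintype.card U) =
      ∑ i ∈ Finset.range (Fintype.card U), (1 : ℝ) / (i + 1) := rfl
  have hcost' : ∑ S ∈ 𝒞, c S * gpi π (Greedy10.asg ψ S) ≤
      Greedy10.Apot 𝒞 c r π y (fun _ => (∅ : Finset (Finset U))) := by
    have hz : ∑ _u : U, (0:ℝ) = 0 := by simp
    rw [hzero, hz] at hψcost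
    linarith
  have hfinal : ∑ S ∈ 𝒞, c S * gpi π (Finset.univ.filter (fun u : U => S ∈ ψ u)) =
      ∑ S ∈ 𝒞, c S * gpi π (Greedy10.asg ψ S) := rfl
  rw [hfinal, ← hHdef]
  exact le_trans hcost' hApot
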